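/- Fix k ∈ ℕ with k ≥ 2, and let B be the real (2^k − 1) × (2^k − 1) matrix with rows and columns indexed by the nonzero vectors of {0,1}^k, where B_{uv} = ⟨u,v⟩ mod 2 (viewed as a real number). Then for every x ∈ ℝ^{2^k − 1}, ‖Bx‖₂ ≥ 2^{(k−2)/2}·‖x‖₂; in particular, B is invertible and its least singular value satisfies σ_min(B) ≥ 2^{(k−2)/2}. -/

import Mathlib

open Finset Matrix


/-- The real `(2^k − 1) × (2^k − 1)` matrix indexed by nonzero vectors of `𝔽₂^k`,
with `B_{uv} = ⟨u,v⟩ mod 2`, viewed as a real number `0` or `1`. -/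



def Bmat (k : ℕ) : Matrix {v : Fin k → ZMod 2 // v ≠ 0} {v : Fin k → ZMod 2 // v ≠ 0} ℝ :=
  Matrix.of fun u v => if dotProduct u.1 v.1 = 1 then 1 else 0

lemma zmod2_cases : ∀ a : ZMod 2, a = 0 ∨ a = 1 := by decide
lemma zmod2_add_self : ∀ a : ZMod 2, a + a = 0 := by decide
lemma zmod2_ne0 : ∀ a : ZMod 2, ¬ a = 0 ↔ a = 1 := by decide
lemma zmod2_ne1 : ∀ a : ZMod 2, ¬ a = 1 ↔ a = 0 := by decide

lemma dot_add_single {k : ℕ} (u v : Fin k → ZMod 2) (j : Fin k) :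
    dotProduct u (v + Pi.single j 1) = dotProduct u v + u j := by
  rw [dotProduct_add, dotProduct_single, mul_one]

lemma card_flip {k : ℕ} (u w : Fin k → ZMod 2) (a b : ZMod 2) (j : Fin k) :
    (univ.filter fun v : Fin k → ZMod 2 => u ⬝ᵥ v = a ∧ w ⬝ᵥ v = b).card
      = (univ.filter fun v : Fin k → ZMod 2 => u ⬝ᵥ v = a + u j ∧ w ⬝ᵥ v = b + w j).card := by
  have hinv : ∀ v : Fin k → ZMod 2, v + Pi.single j 1 + Pi.single j 1 = v := by
    intro v
    rw [add_assoc, ← Pi.single_add, show (1 + 1 : ZMod 2) = 0 by decide, Pi.single_zero, add_zero]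
  apply Finset.card_bij' (fun v _ => v + Pi.single j 1) (fun v _ => v + Pi.single j 1)
  · intro v _; exact hinv v
  · intro v _; exact hinv v
  · intro v hv
    simp only [mem_filter, mem_univ, true_and] at hv ⊢
    rw [dot_add_single, dot_add_single, hv.1, hv.2]; exact ⟨rfl, rfl⟩
  · intro v hv
    simp only [mem_filter, mem_univ, true_and] at hv ⊢
    rw [dot_add_single, dot_add_single, hv.1, hv.2]
    constructor <;> rw [add_assoc, zmod2_add_self, add_zero]

lemma one_add_one_z2 : (1 + 1 : ZMod 2) = 0 := by decide

lemma split_card {k : ℕ} (u : Fin k → ZMod 2) (q : (Fin k → ZMod 2) → Prop) [DecidablePred q] :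
    (univ.filter fun v => u ⬝ᵥ v = 0 ∧ q v).card + (univ.filter fun v => u ⬝ᵥ v = 1 ∧ q v).card
      = (univ.filter q).card := by
  have h := Finset.card_filter_add_card_filter_not
    (s := (univ : Finset (Fin k → ZMod 2)).filter q) (p := fun v => u ⬝ᵥ v = 0)
  simp only [Finset.filter_filter, zmod2_ne0] at h
  rw [← h]
  congr 1 <;> · refine congrArg Finset.card ?_
                ext v
                simp only [mem_filter, mem_univ, true_and]
                tauto

lemma total_card {k : ℕ} (u w : Fin k → ZMod 2) :
    (univ.filter fun v => u ⬝ᵥ v = 0 ∧ w ⬝ᵥ v = 0).card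
    + (univ.filter fun v => u ⬝ᵥ v = 0 ∧ w ⬝ᵥ v = 1).card
    + (univ.filter fun v => u ⬝ᵥ v = 1 ∧ w ⬝ᵥ v = 0).card
    + (univ.filter fun v => u ⬝ᵥ v = 1 ∧ w ⬝ᵥ v = 1).card = 2 ^ k := by
  have h0 := split_card u (fun v => w ⬝ᵥ v = 0)
  have h1 := split_card u (fun v => w ⬝ᵥ v = 1)
  have h2 := Finset.card_filter_add_card_filter_not
    (s := (univ : Finset (Fin k → ZMod 2))) (p := fun v => w ⬝ᵥ v = 0)
  simp only [zmod2_ne0] at h2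
  have hcard : (univ : Finset (Fin k → ZMod 2)).card = 2 ^ k := by
    simp [Finset.card_univ]
  omega

lemma exists_one {k : ℕ} {u : Fin k → ZMod 2} (hu : u ≠ 0) : ∃ j, u j = 1 := by
  by_contra h
  push_neg at h
  apply hu
  funext i
  have := (zmod2_ne1 (u i)).mp (h i)
  simpa using this

lemma count_pair {k : ℕ} (hk : 2 ≤ k) (u w : Fin k → ZMod 2) (hu : u ≠ 0) (hw : w ≠ 0)
    (huw : u ≠ w) :
    (univ.filter fun v => u ⬝ᵥ v = 1 ∧ w ⬝ᵥ v = 1).card = 2 ^ (k - 2) := by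
  let N : ZMod 2 → ZMod 2 → ℕ := fun a b => (univ.filter fun v => u ⬝ᵥ v = a ∧ w ⬝ᵥ v = b).card
  have flip : ∀ a b j, N a b = N (a + u j) (b + w j) := fun a b j => card_flip u w a b j
  have total : N 0 0 + N 0 1 + N 1 0 + N 1 1 = 2 ^ k := total_card u w
  have hpow : (2 : ℕ) ^ k = 4 * 2 ^ (k - 2) := by
    obtain ⟨m, rfl⟩ : ∃ m, k = m + 2 := ⟨k - 2, by omega⟩
    simp [pow_add, pow_succ]
    ring
  obtain ⟨j1, hj1⟩ := exists_one hu
  obtain ⟨j2, hj2⟩ := exists_one hw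
  obtain ⟨j3, hj3⟩ : ∃ j, u j ≠ w j := Function.ne_iff.mp huw
  show N 1 1 = 2 ^ (k - 2)
  have F1 := fun a b => flip a b j1
  have F2 := fun a b => flip a b j2
  have F3 := fun a b => flip a b j3
  rw [hj1] at F1
  rw [hj2] at F2
  rcases zmod2_cases (w j1) with h1 | h1 <;> rcases zmod2_cases (u j2) with h2 | h2 <;>
    rcases zmod2_cases (u j3) with h3 | h3 <;> rcases zmod2_cases (w j3) with h4 | h4 <;>
    first
    | exact absurd (h3.trans h4.symm) hj3
    | · rw [h1] at F1
        rw [h2] at F2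
        rw [h3, h4] at F3
        have A1 := F1 0 0; have A2 := F1 0 1; have A3 := F1 1 0; have A4 := F1 1 1
        have B1 := F2 0 0; have B2 := F2 0 1; have B3 := F2 1 0; have B4 := F2 1 1
        have C1 := F3 0 0; have C2 := F3 0 1; have C3 := F3 1 0; have C4 := F3 1 1
        simp only [zero_add, add_zero, one_add_one_z2] at A1 A2 A3 A4 B1 B2 B3 B4 C1 C2 C3 C4
        omega

lemma count_diag {k : ℕ} (hk : 1 ≤ k) (u : Fin k → ZMod 2) (hu : u ≠ 0) :
    (univ.filter fun v => u ⬝ᵥ v = 1).card = 2 ^ (k - 1) := by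
  let N : ZMod 2 → ZMod 2 → ℕ := fun a b => (univ.filter fun v => u ⬝ᵥ v = a ∧ u ⬝ᵥ v = b).card
  have flip : ∀ a b j, N a b = N (a + u j) (b + u j) := fun a b j => card_flip u u a b j
  have total : N 0 0 + N 0 1 + N 1 0 + N 1 1 = 2 ^ k := total_card u u
  have hz : N 0 1 = 0 ∧ N 1 0 = 0 := by
    constructor <;> · apply Finset.card_eq_zero.mpr
                      apply Finset.filter_eq_empty_iff.mpr
                      rintro v - ⟨e1, e2⟩
                      rw [e1] at e2
                      exact absurd e2 (by decide)
  obtain ⟨j1, hj1⟩ := exists_one hu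
  have F := flip 1 1 j1
  rw [hj1, one_add_one_z2] at F
  have hpow : (2 : ℕ) ^ k = 2 * 2 ^ (k - 1) := by
    obtain ⟨m, rfl⟩ : ∃ m, k = m + 1 := ⟨k - 1, by omega⟩
    simp [pow_succ]
    ring
  have hgoal : (univ.filter fun v => u ⬝ᵥ v = 1).card = N 1 1 := by
    refine congrArg Finset.card ?_
    ext v
    simp only [mem_filter, mem_univ, true_and, and_self]
  omega


lemma card_subtype_eq {k : ℕ} (u w : Fin k → ZMod 2) :
    ((univ : Finset {v : Fin k → ZMod 2 // v ≠ 0}).filter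
        fun v => u ⬝ᵥ v.1 = 1 ∧ w ⬝ᵥ v.1 = 1).card
      = (univ.filter fun v : Fin k → ZMod 2 => u ⬝ᵥ v = 1 ∧ w ⬝ᵥ v = 1).card := by
  apply Finset.card_bij (fun v _ => v.1)
  · intro a ha
    simp only [mem_filter, mem_univ, true_and] at ha ⊢
    exact ha
  · intro a _ b _ h
    exact Subtype.ext h
  · intro b hb
    simp only [mem_filter, mem_univ, true_and] at hb
    have hb0 : b ≠ 0 := by
      rintro rfl
      rw [dotProduct_zero] at hb
      exact absurd hb.1 (by decide)
    exact ⟨⟨b, hb0⟩, by simpa using hb, rfl⟩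

lemma Bmul {k : ℕ} (hk : 2 ≤ k) (u w : {v : Fin k → ZMod 2 // v ≠ 0}) :
    (Bmat k * Bmat k) u w = 2 ^ (k - 2) + (if u = w then (2 : ℝ) ^ (k - 2) else 0) := by
  have step1 : (Bmat k * Bmat k) u w
      = ∑ v : {v : Fin k → ZMod 2 // v ≠ 0},
          (if u.1 ⬝ᵥ v.1 = 1 ∧ w.1 ⬝ᵥ v.1 = 1 then (1 : ℝ) else 0) := by
    rw [Matrix.mul_apply]
    refine Finset.sum_congr rfl fun v _ => ?_
    simp only [Bmat, Matrix.of_apply]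
    rw [dotProduct_comm v.1 w.1]
    by_cases h1 : u.1 ⬝ᵥ v.1 = 1 <;> by_cases h2 : w.1 ⬝ᵥ v.1 = 1 <;> simp [h1, h2]
  rw [step1, Finset.sum_boole, card_subtype_eq u.1 w.1]
  by_cases huw : u = w
  · subst huw
    simp only [if_pos rfl]
    have : (univ.filter fun v : Fin k → ZMod 2 => u.1 ⬝ᵥ v = 1 ∧ u.1 ⬝ᵥ v = 1).card
        = 2 ^ (k - 1) := by
      have e : (univ.filter fun v : Fin k → ZMod 2 => u.1 ⬝ᵥ v = 1 ∧ u.1 ⬝ᵥ v = 1)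
          = univ.filter fun v : Fin k → ZMod 2 => u.1 ⬝ᵥ v = 1 := by
        ext v; simp only [mem_filter, mem_univ, true_and, and_self]
      rw [e]
      exact count_diag (by omega) u.1 u.2
    rw [this]
    have hk1 : k - 1 = (k - 2) + 1 := by omega
    rw [hk1, pow_succ]
    push_cast
    ring
  · rw [if_neg huw]
    have : u.1 ≠ w.1 := fun h => huw (Subtype.ext h)
    rw [count_pair hk u.1 w.1 u.2 w.2 this]
    push_cast
    ring

lemma quad {k : ℕ} (hk : 2 ≤ k) (x : {v : Fin k → ZMod 2 // v ≠ 0} → ℝ) :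
    ∑ i, ((Bmat k).mulVec x i) ^ 2
      = 2 ^ (k - 2) * ((∑ i, x i) ^ 2 + ∑ i, x i ^ 2) := by
  have hsym : (Bmat k)ᵀ = Bmat k := by
    ext u v
    simp only [Matrix.transpose_apply, Bmat, Matrix.of_apply]
    rw [dotProduct_comm]
  have h2 : x ᵥ* Bmat k = Bmat k *ᵥ x := by
    conv_lhs => rw [← hsym]
    exact Matrix.vecMul_transpose _ _
  have l1 : x ⬝ᵥ (Bmat k * Bmat k) *ᵥ x = ∑ i, ((Bmat k).mulVec x i) ^ 2 := by
    rw [← Matrix.mulVec_mulVec, Matrix.dotProduct_mulVec, h2]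
    simp [dotProduct, pow_two, Matrix.mulVec]
  rw [← l1]
  have l2 : ∀ u, ((Bmat k * Bmat k) *ᵥ x) u
      = 2 ^ (k - 2) * (∑ w, x w) + 2 ^ (k - 2) * x u := by
    intro u
    have e0 : ((Bmat k * Bmat k) *ᵥ x) u = ∑ w, (Bmat k * Bmat k) u w * x w := rfl
    rw [e0]
    calc ∑ w, (Bmat k * Bmat k) u w * x w
        = ∑ w, (2 ^ (k - 2) + if u = w then (2 : ℝ) ^ (k - 2) else 0) * x w := by
          refine Finset.sum_congr rfl fun w _ => ?_
          rw [Bmul hk u w]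
      _ = ∑ w, (2 : ℝ) ^ (k - 2) * x w
            + ∑ w, (if u = w then (2 : ℝ) ^ (k - 2) else 0) * x w := by
          rw [← Finset.sum_add_distrib]
          exact Finset.sum_congr rfl fun w _ => by ring
      _ = 2 ^ (k - 2) * (∑ w, x w) + 2 ^ (k - 2) * x u := by
          rw [Finset.mul_sum]
          congr 1
          simp [ite_mul, Finset.sum_ite_eq]
  rw [dotProduct]
  rw [Finset.sum_congr rfl fun u _ => by rw [l2 u]]
  rw [Finset.sum_congr rfl fun u _ =>
    (by ring : x u * (2 ^ (k - 2) * (∑ w, x w) + 2 ^ (k - 2) * x u)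
      = (2 ^ (k - 2) * (∑ w, x w)) * x u + 2 ^ (k - 2) * x u ^ 2)]
  rw [Finset.sum_add_distrib, ← Finset.mul_sum, ← Finset.mul_sum]
  ring

lemma sqrt_pow_key {k : ℕ} (hk : 2 ≤ k) :
    Real.sqrt ((2 : ℝ) ^ (k - 2)) = (2 : ℝ) ^ (((k : ℝ) - 2) / 2) := by
  rw [← Real.rpow_natCast (2 : ℝ) (k - 2), Nat.cast_sub hk]
  rw [Real.sqrt_eq_rpow, ← Real.rpow_mul (by norm_num : (0:ℝ) ≤ 2)]
  norm_num
  ring_nf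

/-- For every `x`, `‖Bx‖₂ ≥ 2^{(k−2)/2}·‖x‖₂` (Euclidean norms); in particular `B` is
invertible, and its least singular value is at least `2^{(k−2)/2}`. -/
theorem Bmat_sMin (k : ℕ) (hk : 2 ≤ k) :
    (∀ x : {v : Fin k → ZMod 2 // v ≠ 0} → ℝ,
        (2 : ℝ) ^ (((k : ℝ) - 2) / 2) * Real.sqrt (∑ i, x i ^ 2)
          ≤ Real.sqrt (∑ i, ((Bmat k).mulVec x i) ^ 2)) ∧
      IsUnit (Bmat k) := by
  have hp : (0 : ℝ) < 2 ^ (k - 2) := by positivity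
  constructor
  · intro x
    have hq := quad hk x
    have hnn : (0 : ℝ) ≤ ∑ i, x i ^ 2 :=
      Finset.sum_nonneg fun i _ => sq_nonneg _
    have step : 2 ^ (k - 2) * ∑ i, x i ^ 2 ≤ ∑ i, ((Bmat k).mulVec x i) ^ 2 := by
      rw [hq]
      nlinarith [sq_nonneg (∑ i, x i)]
    calc (2 : ℝ) ^ (((k : ℝ) - 2) / 2) * Real.sqrt (∑ i, x i ^ 2)
        = Real.sqrt (2 ^ (k - 2) * ∑ i, x i ^ 2) := by
          rw [Real.sqrt_mul (by positivity), sqrt_pow_key hk]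
      _ ≤ Real.sqrt (∑ i, ((Bmat k).mulVec x i) ^ 2) := Real.sqrt_le_sqrt step
  · rw [← Matrix.mulVec_injective_iff_isUnit]
    intro a b h
    have hd : (Bmat k).mulVec (a - b) = 0 := by
      rw [Matrix.mulVec_sub, h, sub_self]
    have hq := quad hk (a - b)
    rw [hd] at hq
    simp only [Pi.sub_apply] at hq
    norm_num at hq
    have h0 : ∑ i, (a i - b i) ^ 2 = 0 := by
      nlinarith [sq_nonneg ((∑ i, a i) - ∑ i, b i),
        Finset.sum_nonneg (fun i (_ : i ∈ univ) => sq_nonneg (a i - b i))]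
    have hall := (Finset.sum_eq_zero_iff_of_nonneg
      (fun i (_ : i ∈ univ) => sq_nonneg (a i - b i))).mp h0
    funext i
    have h1 := pow_eq_zero_iff (n := 2) (by norm_num) |>.mp (hall i (mem_univ i))
    linarith
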